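/- (Appendix computation: kernel of $\partial$ on the local model.) Work formally with coordinates $y_1, \ldots, y_d$ and $x_1, \ldots, x_c$. Consider the free module with basis elements $a_{J,K}(y)\,((dx_K \wedge dy_J)^* \cdot dy)\, \partial_x^{K'}$, where $J \subseteq \{1,\ldots,d\}$, $K \subseteq \{1,\ldots,c\}$, $K'$ a multi-index in the $x$-variables, and $a_{J,K}$ depends only on $y$. Define the right action of $\partial = \sum_k (dx_k \wedge) \partial_{x_k} + \sum_j (dy_j \wedge) \partial_{y_j}$ by the formula (A3) of the paper. Then an element killed by right multiplication by $\partial$ and involving no $\partial_x^{K'}$ factors must have $a_{J,K} = 0$ whenever $K \neq \emptyset$, and the only elements of the form $a(y)\,(dy^* \cdot dy)$ killed by $\partial$ are those with $a$ constant. -/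

import Mathlib

/-- The sign `sgn(k, S)` of moving the index `k` past the elements of `S` below it. -/
def moveSign {m : ℕ} (k : Fin m) (S : Finset (Fin m)) : ℤ :=
  (-1) ^ ((S.filter fun j => j < k).card)

lemma coeff_pderiv' {σ : Type*} [DecidableEq σ] (i : σ) (p : MvPolynomial σ ℂ)
    (m : σ →₀ ℕ) :
    MvPolynomial.coeff m (MvPolynomial.pderiv i p)
      = (m i + 1) * MvPolynomial.coeff (m + Finsupp.single i 1) p := by
  induction p using MvPolynomial.induction_on' with
  | monomial s b =>
    rw [MvPolynomial.pderiv_monomial]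
    simp only [MvPolynomial.coeff_monomial]
    by_cases hs : s = m + Finsupp.single i 1
    · subst hs
      have h1 : (m + Finsupp.single i 1) - Finsupp.single i 1 = m := by
        ext j
        rw [Finsupp.tsub_apply, Finsupp.add_apply]
        omega
      have h2 : ((m + Finsupp.single i 1 : σ →₀ ℕ)) i = m i + 1 := by simp
      rw [if_pos h1, if_pos rfl, h2]
      push_cast; ring
    · rw [if_neg hs]
      by_cases hsi : s i = 0
      · by_cases h : s - Finsupp.single i 1 = m
        · simp [h, hsi]
        · simp [h]
      · have h : s - Finsupp.single i 1 ≠ m := by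
          intro h
          apply hs
          ext j
          have hj := DFunLike.congr_fun h j
          rw [Finsupp.tsub_apply] at hj
          rw [Finsupp.add_apply]
          by_cases hji : j = i
          · subst hji
            rw [Finsupp.single_apply, if_pos rfl] at hj ⊢
            omega
          · rw [Finsupp.single_apply, if_neg (Ne.symm hji)] at hj ⊢
            omega
        simp [h]
  | add p q hp hq => simp [hp, hq, mul_add]

lemma eq_C_of_pderiv_eq_zero {σ : Type*} [DecidableEq σ] (p : MvPolynomial σ ℂ)
    (h : ∀ i, MvPolynomial.pderiv i p = 0) :
    p = MvPolynomial.C (MvPolynomial.coeff 0 p) := by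
  ext m
  rw [MvPolynomial.coeff_C]
  by_cases hm : 0 = m
  · rw [if_pos hm, hm]
  · rw [if_neg hm]
    have hm' : m ≠ 0 := fun h' => hm h'.symm
    obtain ⟨i, hi⟩ := Finsupp.ne_iff.mp hm'
    simp only [Finsupp.coe_zero, Pi.zero_apply] at hi
    have hmi : 0 < m i := by omega
    have key := coeff_pderiv' i p (m - Finsupp.single i 1)
    rw [h i] at key
    have hrec : (m - Finsupp.single i 1) + Finsupp.single i 1 = m := by
      ext j
      rw [Finsupp.add_apply, Finsupp.tsub_apply]
      by_cases hji : j = i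
      · subst hji; rw [Finsupp.single_apply, if_pos rfl]; omega
      · rw [Finsupp.single_apply, if_neg (Ne.symm hji)]; omega
    rw [hrec] at key
    simp only [MvPolynomial.coeff_zero] at key
    have hne := Nat.cast_add_one_ne_zero (R := ℂ) ((m - Finsupp.single i 1 : σ →₀ ℕ) i)
    exact (mul_eq_zero.mp key.symm).resolve_left hne


/-- Appendix computation.  An element of the local model is a combination of basis
elements `(dx_K ∧ dy_J)^* · dy` with coefficients `a_{J,K}(y)` (formal functions of
`y`, here polynomials), with no `∂_x^{K'}` factors.  Right multiplication by
`∂` has (by formula (A3)) a `dy`-component and a `∂_{x_k}`-component; expressing that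
both vanish (hypotheses `hDy`, `hDx`), one concludes: `a_{J,K} = 0` whenever
`K ≠ ∅`, and an element of the form `a(y) (dy^* · dy)` killed by `∂` has `a`
constant. -/
theorem appendix_kernel_computation (d c : ℕ)
    (a : Finset (Fin d) × Finset (Fin c) → MvPolynomial (Fin d) ℂ)
    (hDy : ∀ (J : Finset (Fin d)) (K : Finset (Fin c)),
      ∑ j ∈ Jᶜ, (((-1 : ℤ) ^ (K.card - 1) * moveSign j J) •
        MvPolynomial.pderiv j (a (insert j J, K))) = 0)
    (hDx : ∀ (J : Finset (Fin d)) (K : Finset (Fin c)) (kk : Fin c), kk ∉ K →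
      moveSign kk K • a (J, insert kk K) = 0) :
    (∀ (J : Finset (Fin d)) (K : Finset (Fin c)), K.Nonempty → a (J, K) = 0) ∧
    ((∀ (J : Finset (Fin d)) (K : Finset (Fin c)),
        (J, K) ≠ (Finset.univ, (∅ : Finset (Fin c))) → a (J, K) = 0) →
      ∃ r : ℂ, a (Finset.univ, ∅) = MvPolynomial.C r) := by
  constructor
  · rintro J K ⟨kk, hkk⟩
    have h := hDx J (K.erase kk) kk (Finset.notMem_erase kk K)
    rw [Finset.insert_erase hkk] at h
    rcases smul_eq_zero.mp h with h | h
    · exact absurd h (pow_ne_zero _ (by norm_num))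
    · exact h
  · intro _
    refine ⟨_, eq_C_of_pderiv_eq_zero _ ?_⟩
    intro i
    have h := hDy ({i}ᶜ) ∅
    rw [compl_compl, Finset.sum_singleton] at h
    have hins : insert i ({i}ᶜ : Finset (Fin d)) = Finset.univ := by simp
    rw [hins] at h
    rcases smul_eq_zero.mp h with h | h
    · exact absurd h (mul_ne_zero (pow_ne_zero _ (by norm_num))
        (pow_ne_zero _ (by norm_num)))
    · exact h
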